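/- Let K be a field of characteristic 0, k > 2, n ≥ 1, and g = (x+y^k)^n in K⟨x,y⟩. Then the homogeneous component of maximal degree of [y, (x+y^k)^n] equals [y, xy^{k(n−1)} + y^k x y^{k(n−2)} + ⋯ + y^{k(n−1)} x], and deg([y,(x+y^k)^n]) = k(n−1) + 2. -/

import Mathlib

open scoped BigOperators

open FreeMonoid

abbrev FM := FreeMonoid (Fin 2)

lemma len_pow_of (a : Fin 2) (n : ℕ) : ((FreeMonoid.of a)^n).length = n := by
  induction n with
  | zero => simp [pow_zero]
  | succ m ih => rw [pow_succ, length_mul, ih, length_of]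

def wrd (i j : ℕ) : FM := (FreeMonoid.of 1)^i * FreeMonoid.of 0 * (FreeMonoid.of 1)^j

lemma wrd_len (i j : ℕ) : (wrd i j).length = i + 1 + j := by
  simp [wrd, length_mul, length_of, len_pow_of]


lemma toList_pow_of (a : Fin 2) (n : ℕ) :
    FreeMonoid.toList ((FreeMonoid.of a)^n) = List.replicate n a := by
  induction n with
  | zero => simp [pow_zero]
  | succ m ih => rw [pow_succ]; simp [ih, List.replicate_succ']

lemma rep_eq : ∀ (i i' : ℕ) (t t' : List (Fin 2)),
    List.replicate i 1 ++ 0 :: t = List.replicate i' 1 ++ 0 :: t' → i = i' ∧ t = t' := by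
  intro i
  induction i with
  | zero =>
    intro i' t t' h
    cases i' with
    | zero => simpa using h
    | succ m => simp [List.replicate_succ] at h
  | succ m ih =>
    intro i' t t' h
    cases i' with
    | zero => simp [List.replicate_succ] at h
    | succ m' =>
      simp only [List.replicate_succ, List.cons_append, List.cons.injEq] at h
      obtain ⟨h1, h2⟩ := ih m' t t' h.2
      exact ⟨by omega, h2⟩

lemma wrd_inj {i j i' j' : ℕ} (h : wrd i j = wrd i' j') : i = i' ∧ j = j' := by
  have := congrArg FreeMonoid.toList h
  simp only [wrd, FreeMonoid.toList_mul, toList_pow_of, FreeMonoid.toList_of] at this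
  rw [List.append_assoc, List.append_assoc, List.singleton_append, List.singleton_append] at this
  obtain ⟨h1, h2⟩ := rep_eq _ _ _ _ this
  refine ⟨h1, ?_⟩
  have := congrArg List.length h2
  simpa using this

section
variable {K : Type*} [Field K]

noncomputable def XX (K : Type*) [Field K] : MonoidAlgebra K FM :=
  MonoidAlgebra.single (FreeMonoid.of 0) 1
noncomputable def YY (K : Type*) [Field K] : MonoidAlgebra K FM :=
  MonoidAlgebra.single (FreeMonoid.of 1) 1

lemma YY_pow (p : ℕ) : (YY K)^p = MonoidAlgebra.single ((FreeMonoid.of 1)^p) (1:K) := by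
  rw [YY, MonoidAlgebra.single_pow, one_pow]

lemma term_eq (i j : ℕ) :
    (YY K)^i * XX K * (YY K)^j = MonoidAlgebra.single (wrd i j) (1:K) := by
  rw [YY_pow, YY_pow, XX, MonoidAlgebra.single_mul_single, MonoidAlgebra.single_mul_single, wrd]
  ring_nf

lemma mem_support_mul {p q : MonoidAlgebra K FM} {m : FM} (h : m ∈ (p*q).coeff.support) :
    ∃ m1 ∈ p.coeff.support, ∃ m2 ∈ q.coeff.support, m1 * m2 = m := by
  classical
  exact Finset.mem_mul.mp (MonoidAlgebra.support_coeff_mul_subset p q h)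

/-- T k n := middle sum -/
noncomputable def TT (K : Type*) [Field K] (k n : ℕ) : MonoidAlgebra K FM :=
  ∑ i ∈ Finset.range n, (YY K)^(k*i) * XX K * (YY K)^(k*(n-1-i))

lemma TT_support {k n : ℕ} (hn : 1 ≤ n) {m : FM} (hm : m ∈ (TT K k n).coeff.support) :
    m.length = k*(n-1) + 1 := by
  classical
  rw [TT, MonoidAlgebra.coeff_sum] at hm
  have := Finsupp.support_finset_sum hm
  obtain ⟨i, hi, hmem⟩ := Finset.mem_biUnion.mp this
  rw [term_eq] at hmem
  have hsub : (MonoidAlgebra.single (wrd (k*i) (k*(n-1-i))) (1:K)).coeff.support ⊆ {wrd (k*i) (k*(n-1-i))} := by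
    rw [MonoidAlgebra.coeff_single]; exact Finsupp.support_single_subset
  have hm' : m = wrd (k*i) (k*(n-1-i)) := Finset.mem_singleton.mp (hsub hmem)
  rw [hm', wrd_len]
  have hi' : i ≤ n - 1 := by have := Finset.mem_range.mp hi; omega
  have : k*i + k*(n-1-i) = k*(n-1) := by rw [← Nat.mul_add]; congr 1; omega
  omega

/-- Main expansion -/
lemma expand (k : ℕ) (hk : 1 ≤ k) :
    ∀ n : ℕ, 1 ≤ n → ∃ R : MonoidAlgebra K FM,
      (XX K + (YY K)^k)^n = (YY K)^(k*n) + TT K k n + R ∧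
      ∀ m ∈ R.coeff.support, m.length + 2*k ≤ k*n + 2 := by
  intro n hn
  induction n with
  | zero => omega
  | succ n ih =>
    rcases Nat.eq_or_lt_of_le hn with h1 | h1
    · -- n+1 = 1
      refine ⟨0, ?_, by simp⟩
      have hn0 : n = 0 := by omega
      subst hn0
      simp [TT, pow_one, add_comm]
    · have hn1 : 1 ≤ n := by omega
      obtain ⟨R, hR, hRb⟩ := ih hn1
      refine ⟨TT K k n * XX K + (R * XX K + R * (YY K)^k), ?_, ?_⟩
      · rw [pow_succ, hR]
        have hTs : TT K k (n+1) = TT K k n * (YY K)^k + (YY K)^(k*n) * XX K := by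
          simp only [TT, Finset.sum_mul, Finset.sum_range_succ, Nat.add_sub_cancel,
            Nat.sub_self, Nat.mul_zero, pow_zero, mul_one]
          congr 1
          apply Finset.sum_congr rfl
          intro i hi
          have hi' : i < n := Finset.mem_range.mp hi
          have he : n - i = (n-1-i)+1 := by omega
          rw [he, Nat.mul_add, Nat.mul_one, pow_add, ← mul_assoc]
        rw [hTs]
        have hyp : (YY K)^(k*(n+1)) = (YY K)^(k*n) * (YY K)^k := by
          rw [← pow_add, Nat.mul_succ]
        rw [hyp]
        noncomm_ring
      · intro m hm
        classical
        have hsub : m ∈ (TT K k n * XX K).coeff.support ∪ ((R * XX K).coeff.support ∪ (R * (YY K)^k).coeff.support) := by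
          simp only [MonoidAlgebra.coeff_add] at hm
          have h3 := Finsupp.support_add hm
          rcases Finset.mem_union.mp h3 with h | h
          · exact Finset.mem_union_left _ h
          · exact Finset.mem_union_right _ (Finsupp.support_add h)
        have hXsupp : (XX K).coeff.support ⊆ {FreeMonoid.of 0} := by
          rw [XX, MonoidAlgebra.coeff_single]; exact Finsupp.support_single_subset
        have hYsupp : ((YY K)^k).coeff.support ⊆ {(FreeMonoid.of 1)^k} := by
          rw [YY_pow, MonoidAlgebra.coeff_single]; exact Finsupp.support_single_subset
        have hkn : k*(n-1) + k = k*n := by conv_rhs => rw [show n = (n-1)+1 by omega, Nat.mul_add, Nat.mul_one]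
        have hkn2 : k*n + k = k*(n+1) := by ring
        rcases Finset.mem_union.mp hsub with h | h
        · obtain ⟨m1, hm1, m2, hm2, hme⟩ := mem_support_mul h
          have l1 := TT_support hn1 hm1
          have l2 : m2.length = 1 := by
            have := Finset.mem_singleton.mp (hXsupp hm2); rw [this, length_of]
          have : m.length = m1.length + m2.length := by rw [← hme, length_mul]
          omega
        rcases Finset.mem_union.mp h with h | h
        · obtain ⟨m1, hm1, m2, hm2, hme⟩ := mem_support_mul h
          have l1 := hRb m1 hm1
          have l2 : m2.length = 1 := by
            have := Finset.mem_singleton.mp (hXsupp hm2); rw [this, length_of]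
          have : m.length = m1.length + m2.length := by rw [← hme, length_mul]
          omega
        · obtain ⟨m1, hm1, m2, hm2, hme⟩ := mem_support_mul h
          have l1 := hRb m1 hm1
          have l2 : m2.length = k := by
            have := Finset.mem_singleton.mp (hYsupp hm2); rw [this, len_pow_of]
          have : m.length = m1.length + m2.length := by rw [← hme, length_mul]
          omega


lemma of1_mul_wrd (i j : ℕ) : FreeMonoid.of 1 * wrd i j = wrd (i+1) j := by
  rw [wrd, wrd, pow_succ', ← mul_assoc, ← mul_assoc]

lemma wrd_mul_of1 (i j : ℕ) : wrd i j * FreeMonoid.of 1 = wrd i (j+1) := by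
  rw [wrd, wrd, pow_succ, mul_assoc]

lemma YY_supp : (YY K).coeff.support ⊆ {FreeMonoid.of 1} := by
  rw [YY, MonoidAlgebra.coeff_single]; exact Finsupp.support_single_subset

lemma YY_mul_TT (k n : ℕ) : YY K * TT K k n =
    ∑ i ∈ Finset.range n, MonoidAlgebra.single (wrd (k*i+1) (k*(n-1-i))) (1:K) := by
  rw [TT, Finset.mul_sum]
  refine Finset.sum_congr rfl fun i _ => ?_
  rw [term_eq, YY, MonoidAlgebra.single_mul_single, one_mul, of1_mul_wrd]

lemma TT_mul_YY (k n : ℕ) : TT K k n * YY K =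
    ∑ i ∈ Finset.range n, MonoidAlgebra.single (wrd (k*i) (k*(n-1-i)+1)) (1:K) := by
  rw [TT, Finset.sum_mul]
  refine Finset.sum_congr rfl fun i _ => ?_
  rw [term_eq, YY, MonoidAlgebra.single_mul_single, one_mul, wrd_mul_of1]

lemma H_coeff {k n : ℕ} (hk : 1 ≤ k) (hn : 1 ≤ n) :
    (YY K * TT K k n - TT K k n * YY K).coeff (wrd (k*(n-1)+1) 0) = 1 := by
  classical
  rw [MonoidAlgebra.coeff_sub, Finsupp.sub_apply, YY_mul_TT, TT_mul_YY, MonoidAlgebra.coeff_sum,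
    MonoidAlgebra.coeff_sum, Finsupp.finset_sum_apply, Finsupp.finset_sum_apply]
  have h1 : (∑ i ∈ Finset.range n,
      (MonoidAlgebra.single (wrd (k*i+1) (k*(n-1-i))) (1:K)).coeff (wrd (k*(n-1)+1) 0)) = 1 := by
    rw [Finset.sum_eq_single_of_mem (n-1) (Finset.mem_range.mpr (by omega))]
    · rw [Nat.sub_self, Nat.mul_zero, MonoidAlgebra.coeff_single, Finsupp.single_apply, if_pos rfl]
    · intro i hi hine
      rw [MonoidAlgebra.coeff_single, Finsupp.single_apply, if_neg]
      intro hw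
      obtain ⟨h1, _⟩ := wrd_inj hw
      have : k*i = k*(n-1) := by omega
      exact hine (Nat.eq_of_mul_eq_mul_left (by omega) this)
  have h2 : (∑ i ∈ Finset.range n,
      (MonoidAlgebra.single (wrd (k*i) (k*(n-1-i)+1)) (1:K)).coeff (wrd (k*(n-1)+1) 0)) = 0 := by
    apply Finset.sum_eq_zero
    intro i _
    rw [MonoidAlgebra.coeff_single, Finsupp.single_apply, if_neg]
    intro hw
    obtain ⟨_, h2⟩ := wrd_inj hw
    omega
  rw [h1, h2, sub_zero]

lemma H_supp {k n : ℕ} (hn : 1 ≤ n) {m : FM}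
    (hm : m ∈ (YY K * TT K k n - TT K k n * YY K).coeff.support) : m.length = k*(n-1) + 2 := by
  classical
  rw [MonoidAlgebra.coeff_sub] at hm
  rcases Finset.mem_union.mp (Finsupp.support_sub hm) with h | h
  · obtain ⟨m1, h1, m2, h2, he⟩ := mem_support_mul h
    have hm1 : m1 = FreeMonoid.of 1 := Finset.mem_singleton.mp (YY_supp h1)
    have := TT_support hn h2
    rw [← he, length_mul, hm1, length_of, this]; omega
  · obtain ⟨m1, h1, m2, h2, he⟩ := mem_support_mul h
    have hm2 : m2 = FreeMonoid.of 1 := Finset.mem_singleton.mp (YY_supp h2)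
    have := TT_support hn h1
    rw [← he, length_mul, hm2, length_of, this]

end

/-- The total degree of an element of the free associative algebra, realized as
the monoid algebra of the free monoid. -/
noncomputable def ncDeg {K : Type*} [Field K]
    (p : MonoidAlgebra K (FreeMonoid (Fin 2))) : ℕ :=
  p.coeff.support.sup fun m => m.length

/-- The homogeneous component of degree `d` of an element of the free algebra. -/
noncomputable def ncComponent {K : Type*} [Field K]
    (p : MonoidAlgebra K (FreeMonoid (Fin 2))) (d : ℕ) :
    MonoidAlgebra K (FreeMonoid (Fin 2)) :=
  MonoidAlgebra.ofCoeff (Finsupp.filter (fun m => m.length = d) p.coeff)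

/-- For `k > 2`, `n ≥ 1`, the homogeneous component of maximal degree of
`[y, (x+y^k)^n]` equals `[y, Σ_{i=0}^{n-1} y^{k i} x y^{k(n-1-i)}]`, and
`deg([y,(x+y^k)^n]) = k(n−1) + 2`. -/
theorem stmt_14 (K : Type*) [Field K] [CharZero K] (k n : ℕ)
    (hk : 2 < k) (hn : 1 ≤ n)
    (x y : MonoidAlgebra K (FreeMonoid (Fin 2)))
    (hx : x = MonoidAlgebra.of K (FreeMonoid (Fin 2)) (FreeMonoid.of 0))
    (hy : y = MonoidAlgebra.of K (FreeMonoid (Fin 2)) (FreeMonoid.of 1))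
    (L S : MonoidAlgebra K (FreeMonoid (Fin 2)))
    (hL : L = y * (x + y ^ k) ^ n - (x + y ^ k) ^ n * y)
    (hS : S = ∑ i ∈ Finset.range n, y ^ (k * i) * x * y ^ (k * (n - 1 - i))) :
    ncDeg L = k * (n - 1) + 2 ∧
    ncComponent L (ncDeg L) = y * S - S * y := by
  classical
  have hk1 : 1 ≤ k := by omega
  subst hx hy
  have hxX : (MonoidAlgebra.of K (FreeMonoid (Fin 2))) (FreeMonoid.of 0) = XX K := rfl
  have hyY : (MonoidAlgebra.of K (FreeMonoid (Fin 2))) (FreeMonoid.of 1) = YY K := rfl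
  rw [hxX, hyY] at hL hS
  rw [hyY]
  have hST : S = TT K k n := by rw [hS, TT]
  obtain ⟨R, hg, hRb⟩ := expand (K := K) k hk1 n hn
  have hkn : k*(n-1) + k = k*n := by
    conv_rhs => rw [show n = (n-1)+1 by omega, Nat.mul_add, Nat.mul_one]
  have hLE : L = (YY K * TT K k n - TT K k n * YY K) + (YY K * R - R * YY K) := by
    rw [hL, hg]
    have hc : YY K * (YY K)^(k*n) = (YY K)^(k*n) * YY K :=
      ((Commute.refl (YY K)).pow_right (k*n)).eq
    rw [mul_add, mul_add, add_mul, add_mul, hc]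
    abel
  have hEsupp : ∀ m ∈ (YY K * R - R * YY K).coeff.support, m.length + 2*k ≤ k*n + 3 := by
    intro m hm
    rw [MonoidAlgebra.coeff_sub] at hm
    rcases Finset.mem_union.mp (Finsupp.support_sub hm) with h | h
    · obtain ⟨m1, h1, m2, h2, he⟩ := mem_support_mul h
      have hm1 : m1 = FreeMonoid.of 1 := Finset.mem_singleton.mp (YY_supp h1)
      have hb := hRb m2 h2
      have hlen : m.length = 1 + m2.length := by
        rw [← he, FreeMonoid.length_mul, hm1, FreeMonoid.length_of]
      omega
    · obtain ⟨m1, h1, m2, h2, he⟩ := mem_support_mul h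
      have hm2 : m2 = FreeMonoid.of 1 := Finset.mem_singleton.mp (YY_supp h2)
      have hb := hRb m1 h1
      have hlen : m.length = m1.length + 1 := by
        rw [← he, FreeMonoid.length_mul, hm2, FreeMonoid.length_of]
      omega
  have hm0len : (wrd (k*(n-1)+1) 0).length = k*(n-1)+2 := by rw [wrd_len]
  have hEm0 : (YY K * R - R * YY K).coeff (wrd (k*(n-1)+1) 0) = 0 := by
    by_contra h0
    have hmem := Finsupp.mem_support_iff.mpr h0
    have := hEsupp _ hmem
    rw [hm0len] at this
    omega
  have hLm0 : L.coeff (wrd (k*(n-1)+1) 0) = 1 := by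
    rw [hLE, MonoidAlgebra.coeff_add, Finsupp.add_apply, hEm0, add_zero]
    exact H_coeff hk1 hn
  have hm0mem : wrd (k*(n-1)+1) 0 ∈ L.coeff.support :=
    Finsupp.mem_support_iff.mpr (by rw [hLm0]; exact one_ne_zero)
  have hdeg : ncDeg L = k*(n-1)+2 := by
    apply le_antisymm
    · rw [ncDeg]
      apply Finset.sup_le
      intro m hm
      have hmem : m ∈ (YY K * TT K k n - TT K k n * YY K).coeff.support ∪ (YY K * R - R * YY K).coeff.support := by
        rw [hLE, MonoidAlgebra.coeff_add] at hm
        exact Finsupp.support_add hm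
      rcases Finset.mem_union.mp hmem with h | h
      · exact le_of_eq (H_supp hn h)
      · have := hEsupp m h; omega
    · rw [ncDeg]
      have := Finset.le_sup (f := fun m : FreeMonoid (Fin 2) => m.length) hm0mem
      simpa [hm0len] using this
  refine ⟨hdeg, ?_⟩
  rw [hdeg, hST, ncComponent]
  ext m
  rw [MonoidAlgebra.coeff_ofCoeff, Finsupp.filter_apply]
  by_cases hp : m.length = k*(n-1)+2
  · rw [if_pos hp, hLE, MonoidAlgebra.coeff_add, Finsupp.add_apply]
    have hE0 : (YY K * R - R * YY K).coeff m = 0 := by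
      by_contra h0
      have := hEsupp m (Finsupp.mem_support_iff.mpr h0)
      omega
    rw [hE0, add_zero]
  · rw [if_neg hp]
    symm
    apply Finsupp.notMem_support_iff.mp
    intro hmem
    exact hp (H_supp hn hmem)
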